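/- For every 0 ≤ a < 1 and 0 ≤ r ≤ 1/3, one has S_r(φ_a) = π · r²(1−a²)²/(1−a²r²)², and consequently S_r(φ_a)/(π − S_r(φ_a)) = (r²/(1−r²)) · (1−a²)²/(1−a⁴r²). -/

import Mathlib

open Metric

open FormalMultilinearSeries NNReal ENNReal

lemma hasFPAt {c : ℕ → ℂ} {f : ℂ → ℂ}
    (hc : ∀ z ∈ ball (0 : ℂ) 1, HasSum (fun n : ℕ => c n * z ^ n) (f z)) :
    HasFPowerSeriesAt f (ofScalars ℂ c) 0 := by
  refine ⟨(2/3 : ℝ≥0), ?_, by norm_num, ?_⟩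
  · apply le_radius_of_tendsto _ (l := 0)
    have h := (hc (2/3 : ℝ) (by simp [Complex.norm_real]; norm_num)).summable.tendsto_atTop_zero
    rw [tendsto_zero_iff_norm_tendsto_zero] at h
    convert h using 2 with n
    rw [ofScalars_norm, norm_mul, norm_pow]
    norm_num [Complex.norm_real]
  · intro y hy
    rw [mem_emetric_ball_zero_iff] at hy
    have hy1 : y ∈ ball (0 : ℂ) 1 := by
      rw [mem_ball_zero_iff]
      calc ‖y‖ < ((2/3 : ℝ≥0) : ℝ) := by exact_mod_cast hy
        _ < 1 := by norm_num
    have := hc y hy1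
    rw [zero_add]
    convert this using 2 with n
    · rfl
    rw [ofScalars_apply_eq, smul_eq_mul]

lemma coeff_unique {c d : ℕ → ℂ} {f : ℂ → ℂ}
    (hc : ∀ z ∈ ball (0 : ℂ) 1, HasSum (fun n : ℕ => c n * z ^ n) (f z))
    (hd : ∀ z ∈ ball (0 : ℂ) 1, HasSum (fun n : ℕ => d n * z ^ n) (f z)) : c = d :=
  ofScalars_series_injective (𝕜 := ℂ) (E := ℂ) ((hasFPAt hc).eq_formalMultilinearSeries (hasFPAt hd))

/-- The Möbius-type map `φ_a(z) = (z − a)/(1 − a z)`. -/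
noncomputable def mobius (a : ℝ) : ℂ → ℂ := fun z => (z - (a : ℂ)) / (1 - (a : ℂ) * z)

/-- `S_r(f) = π Σ_{n≥1} n |aₙ|² r^{2n}`, written in terms of the Taylor coefficients
`c : ℕ → ℂ` of `f` (the `n = 0` term vanishes, so we may sum over all of `ℕ`). -/
noncomputable def Sarea (c : ℕ → ℂ) (r : ℝ) : ℝ :=
  Real.pi * ∑' n : ℕ, (n : ℝ) * ‖c n‖ ^ 2 * r ^ (2 * n)

/-- explicit coefficients of `mobius a` -/
noncomputable def dcoef (a : ℝ) : ℕ → ℂ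
  | 0 => -(a : ℂ)
  | n + 1 => (((1 - a ^ 2) * a ^ n : ℝ) : ℂ)

lemma dcoef_hasSum (a : ℝ) (ha0 : 0 ≤ a) (ha1 : a < 1) :
    ∀ z ∈ ball (0 : ℂ) 1, HasSum (fun n : ℕ => dcoef a n * z ^ n) (mobius a z) := by
  intro z hz
  rw [mem_ball_zero_iff] at hz
  have haz : ‖(a : ℂ) * z‖ < 1 := by
    rw [norm_mul]
    simp only [Complex.norm_real, Real.norm_eq_abs, abs_of_nonneg ha0]
    nlinarith [norm_nonneg z]
  have hne : (1 : ℂ) - (a : ℂ) * z ≠ 0 := by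
    intro h
    have h2 := norm_sub_norm_le (1 : ℂ) ((a : ℂ) * z)
    rw [h, norm_zero, norm_one] at h2
    linarith
  have h1 := (hasSum_geometric_of_norm_lt_one haz).mul_left ((1 - (a:ℂ)^2) * z)
  apply (hasSum_nat_add_iff' 1).mp
  convert h1 using 1
  · rfl
  · funext n
    simp only [dcoef]
    push_cast
    ring
  · simp only [Finset.range_one, Finset.sum_singleton, dcoef, pow_zero, mul_one, mobius]
    rw [eq_mul_inv_iff_mul_eq₀ hne, sub_mul, div_mul_cancel₀ _ hne]
    ring

/-- For `0 ≤ a < 1` and `0 ≤ r ≤ 1/3`, one has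
`S_r(φ_a) = π r²(1−a²)²/(1−a²r²)²` and consequently
`S_r(φ_a)/(π − S_r(φ_a)) = (r²/(1−r²)) (1−a²)²/(1−a⁴r²)`. -/
theorem Sarea_mobius (a : ℝ) (ha0 : 0 ≤ a) (ha1 : a < 1)
    (c : ℕ → ℂ)
    (hc : ∀ z ∈ ball (0 : ℂ) 1, HasSum (fun n : ℕ => c n * z ^ n) (mobius a z))
    (r : ℝ) (hr0 : 0 ≤ r) (hr : r ≤ 1 / 3) :
    Sarea c r = Real.pi * (r ^ 2 * (1 - a ^ 2) ^ 2 / (1 - a ^ 2 * r ^ 2) ^ 2) ∧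
    Sarea c r / (Real.pi - Sarea c r) =
      r ^ 2 / (1 - r ^ 2) * ((1 - a ^ 2) ^ 2 / (1 - a ^ 4 * r ^ 2)) := by
  have hcd : c = dcoef a := coeff_unique hc (dcoef_hasSum a ha0 ha1)
  subst hcd
  have ha2 : a ^ 2 < 1 := by nlinarith
  have hr2 : r ^ 2 ≤ 1 / 9 := by nlinarith
  set x : ℝ := a ^ 2 * r ^ 2 with hxdef
  have hx0 : 0 ≤ x := by positivity
  have hx1 : x < 1 := by nlinarith
  have hx1' : (1 : ℝ) - x ≠ 0 := by linarith
  have hxn : ‖x‖ < 1 := by rw [Real.norm_eq_abs, abs_of_nonneg hx0]; exact hx1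
  have h1 := hasSum_coe_mul_geometric_of_norm_lt_one hxn
  have h2 := hasSum_geometric_of_norm_lt_one hxn
  have h3 := (h1.add h2).mul_left ((1 - a ^ 2) ^ 2 * r ^ 2)
  set T : ℝ := r ^ 2 * (1 - a ^ 2) ^ 2 / (1 - a ^ 2 * r ^ 2) ^ 2 with hTdef
  have hT : HasSum (fun n : ℕ => (n : ℝ) * ‖dcoef a n‖ ^ 2 * r ^ (2 * n)) T := by
    apply (hasSum_nat_add_iff' 1).mp
    convert h3 using 1
    · rfl
    · funext n
      simp only [dcoef, Complex.norm_real, Real.norm_eq_abs,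
        abs_of_nonneg (mul_nonneg (by nlinarith : (0:ℝ) ≤ 1 - a ^ 2) (pow_nonneg ha0 n))]
      push_cast
      ring
    · simp only [Finset.range_one, Finset.sum_singleton, dcoef, Nat.cast_zero, zero_mul,
        mul_zero, sub_zero, hTdef]
      rw [div_eq_iff (by positivity : ((1:ℝ) - a ^ 2 * r ^ 2) ^ 2 ≠ 0)]
      field_simp
      ring
  have hS : Sarea (dcoef a) r = Real.pi * T := by rw [Sarea, hT.tsum_eq]
  refine ⟨hS, ?_⟩
  have hB : (0 : ℝ) < 1 - r ^ 2 := by nlinarith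
  have hC : (0 : ℝ) < 1 - a ^ 4 * r ^ 2 := by nlinarith [sq_nonneg (a ^ 2), sq_nonneg r]
  have hA : ((1:ℝ) - a ^ 2 * r ^ 2) ≠ 0 := by nlinarith
  have hT1 : T < 1 := by
    rw [hTdef, div_lt_one (by positivity)]
    nlinarith
  have hpi := Real.pi_pos
  have hsub : Real.pi - Sarea (dcoef a) r = Real.pi * (1 - T) := by rw [hS]; ring
  rw [hsub, hS, mul_div_mul_left _ _ (ne_of_gt hpi)]
  have hfac : (1 : ℝ) - T = (1 - r ^ 2) * (1 - a ^ 4 * r ^ 2) / (1 - a ^ 2 * r ^ 2) ^ 2 := by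
    rw [hTdef]
    rw [eq_div_iff (pow_ne_zero 2 hA), sub_mul, div_mul_cancel₀ _ (pow_ne_zero 2 hA)]
    ring
  rw [hTdef, hfac]
  rw [div_div_div_cancel_right₀ (pow_ne_zero 2 hA), div_mul_div_comm]
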